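/- (Dual direction of the Legendre duality.) Let P and Q be probability measures on a measurable space X with Q absolutely continuous with respect to P and finite relative entropy D(Q‖P) < ∞, and let λ > 0. Then −λ · D(Q‖P) = inf over bounded measurable C : X → ℝ of { ∫_X C dQ − F(P,C) }, where F(P,C) = −λ log ∫_X exp(−C/λ) dP; equivalently, λ · D(Q‖P) = sup over bounded measurable C of { −∫_X C dQ − λ log ∫_X exp(−C/λ) dP }. -/

import Mathlib

open MeasureTheory Filter Real
open scoped ENNReal Topology

/-- Gibbs inequality: for bounded measurable `f`,
`∫ f dQ ≤ ∫ llr dQ + log ∫ e^f dP`. -/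
lemma gibbs_aux {X : Type*} [MeasurableSpace X]
    (P Q : Measure X) [IsProbabilityMeasure P] [IsProbabilityMeasure Q]
    (hQP : Q ≪ P)
    (hint : Integrable (llr Q P) Q)
    (f : X → ℝ) (hf : Measurable f) (M : ℝ) (hM : ∀ x, |f x| ≤ M) :
    ∫ x, f x ∂Q ≤ ∫ x, llr Q P x ∂Q + Real.log (∫ x, Real.exp (f x) ∂P) := by
  have hfi : Integrable f Q :=
    (integrable_const M).mono' hf.aestronglyMeasurable (Filter.Eventually.of_forall fun x => by
      simpa using hM x)
  have hef : Integrable (fun x => Real.exp (f x)) P := by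
    refine (integrable_const (Real.exp M)).mono' (hf.exp).aestronglyMeasurable
      (Filter.Eventually.of_forall fun x => ?_)
    rw [Real.norm_eq_abs, abs_of_pos (Real.exp_pos _)]
    exact Real.exp_le_exp.2 ((abs_le.1 (hM x)).2)
  have hI : 0 < ∫ x, Real.exp (f x) ∂P := integral_exp_pos hef
  set I := ∫ x, Real.exp (f x) ∂P with hIdef
  set L := Real.log I with hLdef
  -- the auxiliary function g
  set g : X → ℝ := fun x => Real.exp (f x - L) / (Q.rnDeriv P x).toReal with hgdef
  have hg_meas : Measurable g := ((hf.sub measurable_const).exp).div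
    (Q.measurable_rnDeriv P).ennreal_toReal
  have hg_nonneg : ∀ x, 0 ≤ g x := fun x =>
    div_nonneg (Real.exp_pos _).le ENNReal.toReal_nonneg
  -- lintegral bound
  have hlint : ∫⁻ x, ENNReal.ofReal (g x) ∂Q ≤ 1 := by
    have h1 : ∫⁻ x, ENNReal.ofReal (g x) ∂Q
        = ∫⁻ x, (Q.rnDeriv P * fun x => ENNReal.ofReal (g x)) x ∂P := by
      conv_lhs => rw [← Measure.withDensity_rnDeriv_eq Q P hQP]
      exact lintegral_withDensity_eq_lintegral_mul P (Q.measurable_rnDeriv P)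
        (ENNReal.measurable_ofReal.comp hg_meas)
    rw [h1]
    simp only [Pi.mul_apply]
    have hle : ∀ᵐ x ∂P, (Q.rnDeriv P x * ENNReal.ofReal (g x))
        ≤ ENNReal.ofReal (Real.exp (f x - L)) := by
      filter_upwards [Measure.rnDeriv_lt_top Q P] with x hx
      rcases eq_or_ne (Q.rnDeriv P x) 0 with h0 | h0
      · simp [h0]
      · have ht : 0 < (Q.rnDeriv P x).toReal := ENNReal.toReal_pos h0 hx.ne
        have hr : Q.rnDeriv P x = ENNReal.ofReal (Q.rnDeriv P x).toReal := by
          rw [ENNReal.ofReal_toReal hx.ne]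
        rw [hr, ← ENNReal.ofReal_mul ENNReal.toReal_nonneg, hgdef]
        simp only
        rw [mul_div_cancel₀ _ ht.ne']
    calc ∫⁻ x, Q.rnDeriv P x * ENNReal.ofReal (g x) ∂P
        ≤ ∫⁻ x, ENNReal.ofReal (Real.exp (f x - L)) ∂P := lintegral_mono_ae hle
      _ = ENNReal.ofReal (∫ x, Real.exp (f x - L) ∂P) := by
          rw [← ofReal_integral_eq_lintegral_ofReal]
          · exact (hef.div_const (Real.exp L)).congr (Filter.Eventually.of_forall fun x => by
              simp [Real.exp_sub])
          · exact Filter.Eventually.of_forall fun x => (Real.exp_pos _).le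
      _ = 1 := by
          have : ∫ x, Real.exp (f x - L) ∂P = 1 := by
            simp_rw [Real.exp_sub]
            rw [integral_div, hLdef, Real.exp_log hI, div_self hI.ne']
          rw [this, ENNReal.ofReal_one]
  have hg_int : Integrable g Q := by
    refine ⟨hg_meas.aestronglyMeasurable, ?_⟩
    rw [hasFiniteIntegral_iff_ofReal (Filter.Eventually.of_forall hg_nonneg)]
    exact lt_of_le_of_lt hlint ENNReal.one_lt_top
  have hg_le_one : ∫ x, g x ∂Q ≤ 1 := by
    rw [integral_eq_lintegral_of_nonneg_ae (Filter.Eventually.of_forall hg_nonneg)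
      hg_meas.aestronglyMeasurable]
    calc (∫⁻ x, ENNReal.ofReal (g x) ∂Q).toReal ≤ (1 : ℝ≥0∞).toReal :=
          ENNReal.toReal_mono ENNReal.one_ne_top hlint
      _ = 1 := by simp
  -- pointwise inequality
  have hpt : ∀ᵐ x ∂Q, f x - L - llr Q P x ≤ g x - 1 := by
    filter_upwards [Measure.rnDeriv_pos hQP, hQP.ae_le (Measure.rnDeriv_lt_top Q P)]
      with x hpos hlt
    have ht : 0 < (Q.rnDeriv P x).toReal := ENNReal.toReal_pos hpos.ne' hlt.ne
    have h1 : Real.log (g x) ≤ g x - 1 :=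
      Real.log_le_sub_one_of_pos (div_pos (Real.exp_pos _) ht)
    have h2 : Real.log (g x) = f x - L - llr Q P x := by
      rw [hgdef]
      simp only
      rw [Real.log_div (Real.exp_ne_zero _) ht.ne', Real.log_exp]
      rfl
    rw [← h2]; exact h1
  have h1 : Integrable (fun a => f a - L) Q := hfi.sub (integrable_const L)
  have h2 : Integrable (fun a => f a - L - llr Q P a) Q := h1.sub hint
  have h3 : Integrable (fun a => g a - 1) Q := hg_int.sub (integrable_const 1)
  have hmono := integral_mono_ae h2 h3 hpt
  rw [integral_sub h1 hint, integral_sub hfi (integrable_const L),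
    integral_sub hg_int (integrable_const 1)] at hmono
  simp only [integral_const, probReal_univ, ENNReal.toReal_one, smul_eq_mul, one_mul] at hmono
  have : ∫ x, g x ∂Q - 1 ≤ 0 := by linarith
  linarith

theorem legendre_dual_direction {X : Type*} [MeasurableSpace X]
    (P Q : Measure X) [IsProbabilityMeasure P] [IsProbabilityMeasure Q]
    (hQP : Q ≪ P)
    (lam : ℝ) (hlam : 0 < lam)
    (hint : Integrable (fun x => Real.log (Q.rnDeriv P x).toReal) Q) :
    IsGLB
      {r : ℝ | ∃ C : X → ℝ, Measurable C ∧ (∃ M : ℝ, ∀ x, |C x| ≤ M) ∧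
        r = ∫ x, C x ∂Q - (-lam * Real.log (∫ x, Real.exp (-C x / lam) ∂P))}
      (-lam * ∫ x, Real.log (Q.rnDeriv P x).toReal ∂Q) := by
  have hint' : Integrable (llr Q P) Q := hint
  set D := ∫ x, Real.log (Q.rnDeriv P x).toReal ∂Q with hDdef
  have hD : D = ∫ x, llr Q P x ∂Q := rfl
  constructor
  · -- lower bound
    rintro r ⟨C, hC, ⟨M, hM⟩, rfl⟩
    have key := gibbs_aux P Q hQP hint' (fun x => -C x / lam)
      ((hC.neg).div_const lam) (M / lam)
      (fun x => by
        rw [abs_div, abs_neg, abs_of_pos hlam]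
        gcongr
        exact hM x)
    have e : ∫ x, -C x / lam ∂Q = -(∫ x, C x ∂Q) / lam := by
      rw [integral_div, integral_neg]
    rw [e, div_le_iff₀ hlam] at key
    rw [hD]
    nlinarith [key]
  · -- greatest lower bound
    intro b hb
    classical
    set gs : ℕ → X → ℝ := fun n x =>
      if Q.rnDeriv P x = 0 then -(n : ℝ) else max (-(n : ℝ)) (min (llr Q P x) n) with hgsdef
    have hgs_meas : ∀ n, Measurable (gs n) := fun n =>
      Measurable.ite (Q.measurable_rnDeriv P (measurableSet_singleton 0)) measurable_const
        (measurable_const.max ((measurable_llr Q P).min measurable_const))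
    have hgs_bdd : ∀ n x, |gs n x| ≤ n := by
      intro n x
      rw [hgsdef]
      simp only
      split_ifs with h
      · rw [abs_neg, Nat.abs_cast]
      · rw [abs_le]
        constructor
        · exact le_max_left _ _
        · exact max_le (neg_le_self (Nat.cast_nonneg n)) (min_le_right _ _)
    -- eventual identification of the clamp with llr
    have hclamp : ∀ x, (fun n : ℕ => max (-(n : ℝ)) (min (llr Q P x) n))
        =ᶠ[Filter.atTop] fun _ => llr Q P x := by
      intro x
      filter_upwards [Filter.eventually_ge_atTop ⌈|llr Q P x|⌉₊] with n hn
      have hn' : |llr Q P x| ≤ (n : ℝ) := (Nat.le_ceil _).trans (Nat.cast_le.2 hn)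
      rw [min_eq_left ((le_abs_self _).trans hn'),
        max_eq_right ((neg_le_neg hn').trans (neg_abs_le _))]
    -- limit 1 : ∫ gs n dQ → D
    have hlim1 : Tendsto (fun n => ∫ x, gs n x ∂Q) atTop (𝓝 (∫ x, llr Q P x ∂Q)) := by
      refine tendsto_integral_of_dominated_convergence (fun x => |llr Q P x|)
        (fun n => (hgs_meas n).aestronglyMeasurable) hint'.abs ?_ ?_
      · intro n
        filter_upwards [Measure.rnDeriv_pos hQP] with x hx
        rw [hgsdef]
        simp only
        rw [if_neg hx.ne', Real.norm_eq_abs, abs_le]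
        constructor
        · refine le_trans (le_min (neg_abs_le _) ?_) (le_max_right _ _)
          exact (neg_nonpos.2 (abs_nonneg _)).trans (Nat.cast_nonneg n)
        · exact max_le ((neg_nonpos.2 (Nat.cast_nonneg n)).trans (abs_nonneg _))
            ((min_le_left _ _).trans (le_abs_self _))
      · filter_upwards [Measure.rnDeriv_pos hQP] with x hx
        have : (fun n : ℕ => gs n x) =ᶠ[Filter.atTop] fun _ => llr Q P x := by
          refine (hclamp x).congr (Filter.Eventually.of_forall fun n => ?_)
          rw [hgsdef]
          simp only
          rw [if_neg hx.ne']
        exact Tendsto.congr' this.symm tendsto_const_nhds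
    -- limit 2 : ∫ exp (gs n) dP → 1
    have hlim2 : Tendsto (fun n => ∫ x, Real.exp (gs n x) ∂P) atTop (𝓝 1) := by
      have h1 : Tendsto (fun n => ∫ x, Real.exp (gs n x) ∂P) atTop
          (𝓝 (∫ x, (Q.rnDeriv P x).toReal ∂P)) := by
        refine tendsto_integral_of_dominated_convergence
          (fun x => 1 + (Q.rnDeriv P x).toReal)
          (fun n => ((hgs_meas n).exp).aestronglyMeasurable)
          ((integrable_const 1).add (Measure.integrable_toReal_rnDeriv)) ?_ ?_
        · intro n
          filter_upwards [Measure.rnDeriv_lt_top Q P] with x hx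
          rw [Real.norm_eq_abs, abs_of_pos (Real.exp_pos _), hgsdef]
          simp only
          split_ifs with h
          · calc Real.exp (-(n : ℝ)) ≤ Real.exp 0 :=
                Real.exp_le_exp.2 (neg_nonpos.2 (Nat.cast_nonneg n))
              _ = 1 := Real.exp_zero
              _ ≤ 1 + (Q.rnDeriv P x).toReal := le_add_of_nonneg_right ENNReal.toReal_nonneg
          · have ht : 0 < (Q.rnDeriv P x).toReal := ENNReal.toReal_pos h hx.ne
            have hle : max (-(n : ℝ)) (min (llr Q P x) n)
                ≤ max 0 (Real.log (Q.rnDeriv P x).toReal) := by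
              refine max_le ((neg_nonpos.2 (Nat.cast_nonneg n)).trans (le_max_left _ _)) ?_
              exact (min_le_left _ _).trans (le_max_right _ _)
            refine (Real.exp_le_exp.2 hle).trans ?_
            rcases le_total (Real.log (Q.rnDeriv P x).toReal) 0 with h' | h'
            · rw [max_eq_left h', Real.exp_zero]
              exact le_add_of_nonneg_right ENNReal.toReal_nonneg
            · rw [max_eq_right h', Real.exp_log ht]
              linarith
        · filter_upwards [Measure.rnDeriv_lt_top Q P] with x hx
          rcases eq_or_ne (Q.rnDeriv P x) 0 with h0 | h0
          · have he : (fun n : ℕ => Real.exp (gs n x)) = fun n : ℕ => Real.exp (-(n : ℝ)) := by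
              funext n
              rw [hgsdef]
              simp only
              rw [if_pos h0]
            rw [he, h0]
            simp only [ENNReal.toReal_zero]
            exact Real.tendsto_exp_atBot.comp (tendsto_neg_atTop_atBot.comp
              tendsto_natCast_atTop_atTop)
          · have ht : 0 < (Q.rnDeriv P x).toReal := ENNReal.toReal_pos h0 hx.ne
            have hev : (fun n : ℕ => Real.exp (gs n x))
                =ᶠ[Filter.atTop] fun _ => (Q.rnDeriv P x).toReal := by
              refine ((hclamp x).mono fun n hn => ?_)
              rw [hgsdef]
              simp only
              rw [if_neg h0]
              have hn' : -(n : ℝ) ⊔ llr Q P x ⊓ (n : ℝ) = llr Q P x := hn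
              rw [hn']
              exact Real.exp_log ht
            exact Tendsto.congr' hev.symm tendsto_const_nhds
      rwa [Measure.integral_toReal_rnDeriv hQP, probReal_univ] at h1
    -- the sequence of values
    set Rn : ℕ → ℝ := fun n => ∫ x, (-lam * gs n x) ∂Q -
      (-lam * Real.log (∫ x, Real.exp (-(-lam * gs n x) / lam) ∂P)) with hRndef
    have hmem : ∀ n, b ≤ Rn n := by
      intro n
      refine hb ⟨fun x => -lam * gs n x, (hgs_meas n).const_mul (-lam), ⟨lam * n, fun x => ?_⟩, rfl⟩
      rw [abs_mul, abs_neg, abs_of_pos hlam]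
      exact mul_le_mul_of_nonneg_left (hgs_bdd n x) hlam.le
    have hsimp : ∀ n, Rn n = -lam * (∫ x, gs n x ∂Q)
        + lam * Real.log (∫ x, Real.exp (gs n x) ∂P) := by
      intro n
      rw [hRndef]
      simp only
      have harg : ∀ y : ℝ, -(-lam * y) / lam = y := fun y => by
        field_simp
      simp_rw [harg, integral_const_mul]
      ring
    have htend : Tendsto Rn atTop (𝓝 (-lam * ∫ x, llr Q P x ∂Q)) := by
      have h2 : Tendsto (fun n => Real.log (∫ x, Real.exp (gs n x) ∂P)) atTop (𝓝 0) := by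
        have := ((Real.continuousAt_log one_ne_zero).tendsto).comp hlim2
        simpa [Real.log_one, Function.comp_def] using this
      have := (hlim1.const_mul (-lam)).add (h2.const_mul lam)
      simp only [mul_zero, add_zero] at this
      exact this.congr fun n => (hsimp n).symm
    rw [hD]
    exact ge_of_tendsto' htend hmem
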